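/- Domain of the exact EPF: in a finite two-player perfect-information game tree, for every state s the domain of the EPF U_s (the set of μ with U_s(μ) > -∞) equals the closed interval [V̲(s), V̄(s)], where V̲(s) is the follower's backward-induction value against the grim (follower-payoff-minimizing) leader strategy and V̄(s) is the follower's backward-induction value under the joint altruistic (follower-payoff-maximizing) strategy profile. -/

import Mathlib

/-- A finite two-player perfect-information game tree: leaves carry payoffs
`(r₁, r₂)`; internal nodes belong to the leader (`isLeader = true`) or the
follower, and have a nonempty (finite) family of children. -/
inductive GTree : Type
  | leaf (r₁ r₂ : ℝ) : GTree
  | node (isLeader : Bool) (n : ℕ) (children : Fin (n + 1) → GTree) : GTree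

/-- Follower's backward-induction value against the grim (follower-payoff-minimizing)
leader strategy. -/
noncomputable def GTree.grim : GTree → ℝ
  | .leaf _ r₂ => r₂
  | .node isLeader _ c =>
      if isLeader then
        Finset.univ.inf' Finset.univ_nonempty (fun i => (c i).grim)
      else
        Finset.univ.sup' Finset.univ_nonempty (fun i => (c i).grim)

/-- Follower's backward-induction value under the joint altruistic
(follower-payoff-maximizing) strategy profile. -/
noncomputable def GTree.alt : GTree → ℝ
  | .leaf _ r₂ => r₂
  | .node _ _ c => Finset.univ.sup' Finset.univ_nonempty (fun i => (c i).alt)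

def ConcaveE (g : ℝ → EReal) : Prop :=
  ∀ x y t : ℝ, 0 ≤ t → t ≤ 1 →
    (t : EReal) * g x + ((1 - t : ℝ) : EReal) * g y ≤ g (t * x + (1 - t) * y)

/-- Upper concave envelope of an extended-real-valued function. -/
noncomputable def concE (f : ℝ → EReal) : ℝ → EReal :=
  fun μ => ⨅ h : {h : ℝ → EReal // ConcaveE h ∧ ∀ x, f x ≤ h x}, (h : ℝ → EReal) μ

/-- Left truncation at an extended-real threshold. -/
noncomputable def truncE' (g : ℝ → EReal) (t : EReal) : ℝ → EReal :=
  fun μ => if t ≤ (μ : EReal) then g μ else ⊥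

/-- Minimum required incentive of the child `i` among the family `c`:
the maximum grim value over the *other* children (`⊥` if there are none). -/
noncomputable def tauOf {n : ℕ} (c : Fin (n + 1) → GTree) (i : Fin (n + 1)) : EReal :=
  ⨆ (j : Fin (n + 1)) (_ : j ≠ i), ((c j).grim : EReal)

/-- The Enforceable Payoff Frontier (EPF), defined by backward induction:
degenerate at leaves; upper concave envelope of the children's EPFs at leader
nodes; upper concave envelope of the left-truncated children's EPFs at follower
nodes. -/
noncomputable def GTree.epf : GTree → ℝ → EReal
  | .leaf r₁ r₂ => fun μ => if μ = r₂ then (r₁ : EReal) else ⊥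
  | .node isLeader _ c =>
      if isLeader then
        concE (fun μ => ⨆ i, (c i).epf μ)
      else
        concE (fun μ => ⨆ i, truncE' ((c i).epf) (tauOf c i) μ)

/-- Number of leaves of the subtree. -/
def GTree.numLeaves : GTree → ℕ
  | .leaf _ _ => 1
  | .node _ _ c => ∑ i, (c i).numLeaves

-- helper lemmas to append after definitions
lemma le_concE (f : ℝ → EReal) (μ : ℝ) : f μ ≤ concE f μ :=
  le_iInf fun h => h.prop.2 μ

lemma concE_le {f h : ℝ → EReal} (hh : ConcaveE h) (hfh : ∀ x, f x ≤ h x) (μ : ℝ) :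
    concE f μ ≤ h μ :=
  iInf_le (fun p : {h : ℝ → EReal // ConcaveE h ∧ ∀ x, f x ≤ h x} => (p : ℝ → EReal) μ) ⟨h, hh, hfh⟩

lemma coe_mul_ne_bot {t : ℝ} (ht : 0 ≤ t) {x : EReal} (hx : x ≠ ⊥) : (t : EReal) * x ≠ ⊥ := by
  rcases eq_or_lt_of_le ht with h | h
  · rw [← h]; simp
  · induction x with
    | bot => exact absurd rfl hx
    | coe y => rw [← EReal.coe_mul]; exact EReal.coe_ne_bot _
    | top => rw [EReal.mul_top_of_pos (by exact_mod_cast h)]; exact (by simp : (⊤:EReal) ≠ ⊥)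

lemma concaveE_indicator (a b : ℝ) :
    ConcaveE (fun x => if x ∈ Set.Icc a b then (⊤ : EReal) else ⊥) := by
  intro x y t ht0 ht1
  by_cases hc : t * x + (1 - t) * y ∈ Set.Icc a b
  · simp only [hc, if_pos]; exact le_top
  · simp only [hc, if_neg, not_false_iff]
    rcases eq_or_lt_of_le ht0 with h0 | h0
    · have hy : y ∉ Set.Icc a b := by
        intro hy; apply hc; rw [← h0]; simpa using hy
      simp [← h0, hy]
    rcases eq_or_lt_of_le ht1 with h1 | h1
    · have hx : x ∉ Set.Icc a b := by
        intro hx; apply hc; rw [h1]; simpa using hx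
      simp [h1, hx]
    have : x ∉ Set.Icc a b ∨ y ∉ Set.Icc a b := by
      by_contra h
      push_neg at h
      exact hc ⟨by nlinarith [h.1.1, h.2.1], by nlinarith [h.1.2, h.2.2]⟩
    rcases this with hx | hy
    · simp only [hx, if_neg, not_false_iff]
      rw [EReal.coe_mul_bot_of_pos h0, EReal.bot_add]
    · simp only [hy, if_neg, not_false_iff]
      rw [EReal.coe_mul_bot_of_pos (by linarith : (0:ℝ) < 1 - t), EReal.add_bot]

lemma concE_domain {f : ℝ → EReal} {a b : ℝ}
    (ha : f a ≠ ⊥) (hb : f b ≠ ⊥)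
    (hout : ∀ x, x ∉ Set.Icc a b → f x = ⊥) :
    {μ : ℝ | concE f μ ≠ ⊥} = Set.Icc a b := by
  have hab : a ≤ b := by
    by_contra h
    exact ha (hout a (fun h' => h h'.2))
  ext μ
  simp only [Set.mem_setOf_eq]
  constructor
  · intro hμ
    by_contra hμ'
    apply hμ
    have hmaj : ∀ x, f x ≤ (fun x => if x ∈ Set.Icc a b then (⊤ : EReal) else ⊥) x := by
      intro x
      by_cases hx : x ∈ Set.Icc a b
      · simp [hx]
      · simp [hx, hout x hx]
    have h1 := concE_le (concaveE_indicator a b) hmaj μ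
    simpa [hμ'] using h1
  · intro hμ
    rcases eq_or_lt_of_le hab with heq | hlt
    · have : μ = a := le_antisymm (heq ▸ hμ.2) hμ.1
      subst this
      exact fun h => ha (le_antisymm (h ▸ le_concE f μ) bot_le)
    · set t : ℝ := (b - μ) / (b - a) with htdef
      have hba : (0:ℝ) < b - a := by linarith
      have ht0 : 0 ≤ t := div_nonneg (by linarith [hμ.2]) hba.le
      have ht1 : t ≤ 1 := by
        rw [div_le_one hba]; linarith [hμ.1]
      have hcomb : t * a + (1 - t) * b = μ := by
        have h' : t * (b - a) = b - μ := div_mul_cancel₀ _ hba.ne'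
        linear_combination -h'
      have key : ∀ h : {h : ℝ → EReal // ConcaveE h ∧ ∀ x, f x ≤ h x},
          (t : EReal) * f a + ((1 - t : ℝ) : EReal) * f b ≤ (h : ℝ → EReal) μ := by
        rintro ⟨h, hc, hm⟩
        calc (t : EReal) * f a + ((1 - t : ℝ) : EReal) * f b
            ≤ (t : EReal) * h a + ((1 - t : ℝ) : EReal) * h b := by
              gcongr
              · exact hm a
              · exact hm b
          _ ≤ h (t * a + (1 - t) * b) := hc a b t ht0 ht1
          _ = h μ := by rw [hcomb]
      have hL : (t : EReal) * f a + ((1 - t : ℝ) : EReal) * f b ≠ ⊥ := by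
        rw [Ne, EReal.add_eq_bot_iff]
        push_neg
        exact ⟨coe_mul_ne_bot ht0 ha, coe_mul_ne_bot (by linarith) hb⟩
      intro hbot
      exact hL (le_antisymm (hbot ▸ le_iInf key) bot_le)

lemma GTree.grim_le_alt (T : GTree) : T.grim ≤ T.alt := by
  induction T with
  | leaf r₁ r₂ => simp [GTree.grim, GTree.alt]
  | node isLeader n c ih =>
    cases isLeader with
    | false =>
      simp only [GTree.grim, GTree.alt, Bool.false_eq_true, if_false]
      exact Finset.sup'_le _ _ fun i _ =>
        le_trans (ih i) (Finset.le_sup' (fun i => (c i).alt) (Finset.mem_univ i))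
    | true =>
      simp only [GTree.grim, GTree.alt, if_true]
      exact le_trans (Finset.inf'_le (fun i => (c i).grim) (Finset.mem_univ (0 : Fin (n+1))))
        (le_trans (ih 0) (Finset.le_sup' (fun i => (c i).alt) (Finset.mem_univ (0 : Fin (n+1)))))

/-- Domain of the exact EPF: for every state, the set where the EPF exceeds `-∞`
is exactly the closed interval from the grim follower value to the altruistic
follower value. -/
theorem epf_domain (T : GTree) :
    {μ : ℝ | T.epf μ ≠ ⊥} = Set.Icc T.grim T.alt := by
  induction T with
  | leaf r₁ r₂ =>
    ext μ
    simp only [GTree.epf, GTree.grim, GTree.alt, Set.mem_setOf_eq, Set.mem_Icc]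
    by_cases h : μ = r₂
    · simp [h]
    · rw [if_neg h]
      constructor
      · intro hh; exact absurd rfl hh
      · rintro ⟨h1, h2⟩; exact absurd (le_antisymm h2 h1) h
  | node isLeader n c ih =>
    have ihmem : ∀ i (μ : ℝ), (c i).epf μ ≠ ⊥ ↔ μ ∈ Set.Icc (c i).grim (c i).alt := by
      intro i μ
      rw [← ih i]
      rfl
    cases isLeader with
    | true =>
      simp only [GTree.epf, GTree.grim, GTree.alt, if_true]
      set f : ℝ → EReal := fun μ => ⨆ i, (c i).epf μ with hf
      have hdomf : ∀ μ : ℝ, f μ ≠ ⊥ ↔ ∃ i, μ ∈ Set.Icc (c i).grim (c i).alt := by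
        intro μ
        rw [hf]
        simp only [Ne, iSup_eq_bot, not_forall]
        exact exists_congr fun i => ihmem i μ
      obtain ⟨i₀, -, hi₀⟩ := Finset.exists_mem_eq_inf'
        (Finset.univ_nonempty) (fun i => (c i).grim)
      obtain ⟨i₁, -, hi₁⟩ := Finset.exists_mem_eq_sup'
        (Finset.univ_nonempty) (fun i => (c i).alt)
      apply concE_domain
      · rw [hdomf]
        exact ⟨i₀, by rw [hi₀]; exact ⟨le_refl _, (c i₀).grim_le_alt⟩⟩
      · rw [hdomf]
        exact ⟨i₁, by rw [hi₁]; exact ⟨(c i₁).grim_le_alt, le_refl _⟩⟩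
      · intro x hx
        by_contra hfx
        obtain ⟨i, hxi⟩ := (hdomf x).1 hfx
        exact hx ⟨le_trans (Finset.inf'_le _ (Finset.mem_univ i)) hxi.1,
          le_trans hxi.2 (Finset.le_sup' (fun i => (c i).alt) (Finset.mem_univ i))⟩
    | false =>
      simp only [GTree.epf, GTree.grim, GTree.alt, Bool.false_eq_true, if_false]
      set f : ℝ → EReal := fun μ => ⨆ i, truncE' ((c i).epf) (tauOf c i) μ with hf
      have htr : ∀ i (μ : ℝ), truncE' ((c i).epf) (tauOf c i) μ ≠ ⊥ ↔
          (tauOf c i ≤ (μ : EReal) ∧ μ ∈ Set.Icc (c i).grim (c i).alt) := by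
        intro i μ
        unfold truncE'
        split_ifs with h
        · rw [ihmem i μ]; simp [h]
        · simp [h]
      have hdomf : ∀ μ : ℝ, f μ ≠ ⊥ ↔
          ∃ i, tauOf c i ≤ (μ : EReal) ∧ μ ∈ Set.Icc (c i).grim (c i).alt := by
        intro μ
        rw [hf]
        simp only [Ne, iSup_eq_bot, not_forall]
        exact exists_congr fun i => htr i μ
      obtain ⟨i₀, -, hi₀⟩ := Finset.exists_mem_eq_sup'
        (Finset.univ_nonempty) (fun i => (c i).grim)
      obtain ⟨i₁, -, hi₁⟩ := Finset.exists_mem_eq_sup'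
        (Finset.univ_nonempty) (fun i => (c i).alt)
      apply concE_domain
      · rw [hdomf]
        refine ⟨i₀, ?_, ?_⟩
        · refine iSup₂_le fun j _ => ?_
          exact_mod_cast Finset.le_sup' (f := fun i => (c i).grim) (Finset.mem_univ j)
        · rw [hi₀]; exact ⟨le_refl _, (c i₀).grim_le_alt⟩
      · rw [hdomf]
        refine ⟨i₁, ?_, ?_⟩
        · refine iSup₂_le fun j _ => ?_
          have : (c j).grim ≤ Finset.univ.sup' Finset.univ_nonempty (fun i => (c i).alt) :=
            le_trans (c j).grim_le_alt (Finset.le_sup' (fun i => (c i).alt) (Finset.mem_univ j))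
          exact_mod_cast this
        · rw [hi₁]; exact ⟨(c i₁).grim_le_alt, le_refl _⟩
      · intro x hx
        by_contra hfx
        obtain ⟨i, htau, hxi⟩ := (hdomf x).1 hfx
        refine hx ⟨Finset.sup'_le _ _ fun j _ => ?_,
          le_trans hxi.2 (Finset.le_sup' (fun i => (c i).alt) (Finset.mem_univ i))⟩
        by_cases hji : j = i
        · exact hji ▸ hxi.1
        · have h1 : ((c j).grim : EReal) ≤ tauOf c i := le_iSup₂ (f := fun j _ => ((c j).grim : EReal)) j hji
          exact_mod_cast le_trans h1 htau
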